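/- Let M be a real symmetric n×n matrix with n ≥ 3 and T a set of indices of size at least 2 such that e_u - e_v is an eigenvector of M (for a common eigenvalue) for all distinct u, v ∈ T. Then for all distinct u, v ∈ T and all real t, |U(t)_{u,v}|² ≤ 1/(|T| - 1), and the inequality is strict when |T| ≥ 3. -/

import Mathlib

open Matrix Complex

/-- The continuous-time quantum walk transition matrix `U(t) = exp(i t M)`. -/
noncomputable def transU {n : ℕ} (M : Matrix (Fin n) (Fin n) ℝ) (t : ℝ) :
    Matrix (Fin n) (Fin n) ℂ :=
  NormedSpace.exp ((Complex.I * (t : ℂ)) • M.map (fun x => (x : ℂ)))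

open NormedSpace in
private lemma exp_mulVec_eigen {n : ℕ} (A : Matrix (Fin n) (Fin n) ℂ) (x : Fin n → ℂ) (c : ℂ)
    (h : A *ᵥ x = c • x) : NormedSpace.exp A *ᵥ x = NormedSpace.exp c • x := by
  letI : SeminormedRing (Matrix (Fin n) (Fin n) ℂ) := Matrix.linftyOpSemiNormedRing
  letI : NormedRing (Matrix (Fin n) (Fin n) ℂ) := Matrix.linftyOpNormedRing
  letI : NormedAlgebra ℂ (Matrix (Fin n) (Fin n) ℂ) := Matrix.linftyOpNormedAlgebra
  have hpow : ∀ k : ℕ, A ^ k *ᵥ x = c ^ k • x := by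
    intro k
    induction k with
    | zero => simp
    | succ k ih =>
      rw [pow_succ', pow_succ', ← Matrix.mulVec_mulVec, ih, Matrix.mulVec_smul, h,
        smul_smul, mul_comm]
  let L : Matrix (Fin n) (Fin n) ℂ →ₗ[ℂ] (Fin n → ℂ) :=
    { toFun := fun B => B *ᵥ x
      map_add' := fun B C => Matrix.add_mulVec B C x
      map_smul' := fun r B => Matrix.smul_mulVec r B x }
  let L' : Matrix (Fin n) (Fin n) ℂ →L[ℂ] (Fin n → ℂ) :=
    { toLinearMap := L, cont := L.continuous_of_finiteDimensional }
  have hL : NormedSpace.exp A *ᵥ x = L' (NormedSpace.exp A) := rfl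
  rw [hL, exp_eq_tsum ℂ, L'.map_tsum (expSeries_summable' A)]
  have key : ∀ k : ℕ, L' (((k.factorial : ℂ))⁻¹ • A ^ k) = (((k.factorial : ℂ))⁻¹ * c ^ k) • x := by
    intro k
    show (((k.factorial : ℂ))⁻¹ • A ^ k) *ᵥ x = _
    rw [Matrix.smul_mulVec, hpow, smul_smul]
  simp_rw [key]
  rw [Summable.tsum_smul_const ?_ x, exp_eq_tsum ℂ]
  · simp_rw [smul_eq_mul]
  · simpa [smul_eq_mul] using expSeries_summable' (𝕂 := ℂ) c

theorem stmt4 {n : ℕ} (hn : 3 ≤ n) (M : Matrix (Fin n) (Fin n) ℝ) (hM : M.IsSymm)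
    (T : Finset (Fin n)) (hT : 2 ≤ T.card) (θ : ℝ)
    (htwin : ∀ u ∈ T, ∀ v ∈ T, u ≠ v →
      M *ᵥ (Pi.single u 1 - Pi.single v 1) = θ • (Pi.single u 1 - Pi.single v 1)) :
    ∀ u ∈ T, ∀ v ∈ T, u ≠ v → ∀ t : ℝ,
      ‖transU M t u v‖ ^ 2 ≤ 1 / ((T.card : ℝ) - 1) ∧
      (3 ≤ T.card → ‖transU M t u v‖ ^ 2 < 1 / ((T.card : ℝ) - 1)) := by
  intro u hu v hv huv t
  set Mc : Matrix (Fin n) (Fin n) ℂ := M.map (fun x => (x : ℂ)) with hMc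
  set A : Matrix (Fin n) (Fin n) ℂ := (Complex.I * (t : ℂ)) • Mc with hA
  set U : Matrix (Fin n) (Fin n) ℂ := transU M t with hU
  have hUA : U = NormedSpace.exp A := rfl
  -- Hermitian-ness of Mc
  have hMcH : Mcᴴ = Mc := by
    ext i j
    simp only [hMc, conjTranspose_apply, map_apply, Complex.star_def, Complex.conj_ofReal]
    rw [← hM.apply i j]
  -- A is skew-Hermitian
  have hAH : Aᴴ = -A := by
    rw [hA, conjTranspose_smul, hMcH, ← neg_smul]
    congr 1
    simp [Complex.ext_iff]
  -- Unitarity : U * Uᴴ = 1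
  have hunit : U * Uᴴ = 1 := by
    rw [mul_eq_one_comm, hUA, ← Matrix.exp_conjTranspose, hAH,
      ← Matrix.exp_add_of_commute (-A) A (Commute.neg_left (Commute.refl A)),
      neg_add_cancel, NormedSpace.exp_zero]
  -- Row norm 1
  have hrow : ∑ w : Fin n, Complex.normSq (U u w) = 1 := by
    have h1 : (U * Uᴴ) u u = 1 := by rw [hunit]; simp
    have h2 : (U * Uᴴ) u u = ∑ w : Fin n, (Complex.normSq (U u w) : ℂ) := by
      simp [Matrix.mul_apply, conjTranspose_apply, Complex.mul_conj]
    rw [h2] at h1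
    have := congrArg Complex.re h1
    simpa using this
  set e : ℂ := NormedSpace.exp (Complex.I * t * θ) with he
  -- eigenvector transfer to ℂ
  have heigc : ∀ a ∈ T, ∀ b ∈ T, a ≠ b →
      U *ᵥ (Pi.single a 1 - Pi.single b 1 : Fin n → ℂ) =
        e • (Pi.single a 1 - Pi.single b 1 : Fin n → ℂ) := by
    intro a ha b hb hab
    set xr : Fin n → ℝ := Pi.single a 1 - Pi.single b 1 with hxr
    set xc : Fin n → ℂ := fun i => ((xr i : ℝ) : ℂ) with hxc
    have hx : xc = (Pi.single a 1 - Pi.single b 1 : Fin n → ℂ) := by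
      ext i
      simp only [hxc, hxr, Pi.sub_apply, Pi.single_apply]
      push_cast
      split_ifs <;> norm_num
    have hMcx : Mc *ᵥ xc = (θ : ℂ) • xc := by
      ext i
      have h0 := congrFun (htwin a ha b hb hab) i
      simp only [← hxr, Pi.smul_apply, smul_eq_mul] at h0
      simp only [Matrix.mulVec, dotProduct, hMc, Matrix.map_apply, hxc,
        Pi.smul_apply, smul_eq_mul]
      norm_cast
    have hAx : A *ᵥ xc = (Complex.I * t * θ) • xc := by
      rw [hA, Matrix.smul_mulVec, hMcx, smul_smul]
    rw [← hx, hUA, he]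
    exact exp_mulVec_eigen A _ _ hAx
  -- exp scalar has modulus 1
  have habs1 : Complex.normSq e = 1 := by
    have : ‖e‖ = 1 := by
      rw [he, ← Complex.exp_eq_exp_ℂ, Complex.norm_exp]
      simp [mul_assoc, ← Complex.ofReal_mul]
    rw [← Complex.sq_norm, this, one_pow]
  -- entry extraction
  have hentry : ∀ a ∈ T, ∀ b ∈ T, a ≠ b →
      (U *ᵥ (Pi.single a 1 - Pi.single b 1 : Fin n → ℂ)) u = U u a - U u b := by
    intro a ha b hb hab
    simp [Matrix.mulVec_sub, Matrix.mulVec_single, mul_one]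
  -- entries within T \ {u} are equal on row u
  have hequal : ∀ w ∈ T, w ≠ u → U u w = U u v := by
    intro w hw hwu
    by_cases hwv : w = v
    · rw [hwv]
    · have h1 := congrFun (heigc w hw v hv hwv) u
      rw [hentry w hw v hv hwv] at h1
      have h2 : ((Pi.single w 1 - Pi.single v 1 : Fin n → ℂ)) u = 0 := by
        have h3 : u ≠ w := Ne.symm hwu
        simp [Pi.single_apply, Ne.symm h3, Ne.symm huv]
      rw [Pi.smul_apply, h2, smul_zero] at h1
      exact sub_eq_zero.mp h1
  -- difference on the diagonal
  have hdiff : Complex.normSq (U u u - U u v) = 1 := by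
    have h1 := congrFun (heigc u hu v hv huv) u
    rw [hentry u hu v hv huv] at h1
    have h2 : ((Pi.single u 1 - Pi.single v 1 : Fin n → ℂ)) u = 1 := by
      simp [Pi.single_apply, Ne.symm huv]
    rw [Pi.smul_apply, h2, smul_eq_mul, mul_one] at h1
    rw [h1, habs1]
  -- sum decomposition
  set k : ℝ := (T.card : ℝ) - 1 with hk
  have hk1 : (1:ℝ) ≤ k := by
    have : (2:ℝ) ≤ (T.card : ℝ) := by exact_mod_cast hT
    simp only [hk]; linarith
  have hkpos : (0:ℝ) < k := by linarith
  have hsum' : ∑ w ∈ T.erase u, Complex.normSq (U u w) = k * Complex.normSq (U u v) := by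
    rw [Finset.sum_congr rfl (fun w hw => by
      rw [hequal w (Finset.mem_of_mem_erase hw) (Finset.ne_of_mem_erase hw)]),
      Finset.sum_const, Finset.card_erase_of_mem hu, nsmul_eq_mul]
    congr 1
    rw [hk, Nat.cast_sub (by omega)]
    norm_num
  have hle : Complex.normSq (U u u) + k * Complex.normSq (U u v) ≤ 1 := by
    have h1 : ∑ w ∈ T, Complex.normSq (U u w) =
        Complex.normSq (U u u) + ∑ w ∈ T.erase u, Complex.normSq (U u w) := by
      rw [← Finset.add_sum_erase T _ hu]
    have h2 : ∑ w ∈ T, Complex.normSq (U u w) ≤ ∑ w : Fin n, Complex.normSq (U u w) :=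
      Finset.sum_le_sum_of_subset_of_nonneg (Finset.subset_univ T)
        (fun i _ _ => Complex.normSq_nonneg _)
    rw [hrow] at h2
    rw [h1, hsum'] at h2
    exact h2
  have habs2 : ‖U u v‖ ^ 2 = Complex.normSq (U u v) := Complex.sq_norm _
  have hns_uu : 0 ≤ Complex.normSq (U u u) := Complex.normSq_nonneg _
  constructor
  · rw [habs2, le_div_iff₀ hkpos]
    nlinarith [Complex.normSq_nonneg (U u v)]
  · intro hT3
    have hk2 : (2:ℝ) ≤ k := by
      have : (3:ℝ) ≤ (T.card : ℝ) := by exact_mod_cast hT3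
      simp only [hk]; linarith
    rw [habs2]
    by_contra hcon
    push_neg at hcon
    have h1 : 1 ≤ Complex.normSq (U u v) * k := (div_le_iff₀ hkpos).mp hcon
    have hnsa : Complex.normSq (U u u) = 0 := by nlinarith
    have ha0 : U u u = 0 := Complex.normSq_eq_zero.mp hnsa
    rw [ha0, zero_sub, Complex.normSq_neg] at hdiff
    rw [hdiff] at hle
    rw [hnsa] at hle
    linarith
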